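/- The n×n matrix T_n = tridiag(1,1,1) (diagonal, superdiagonal, and subdiagonal entries all 1) is nonsingular if and only if n is not of the form 3l − 1 for any natural number l ≥ 1. -/
import Mathlib


open Matrix

/-- `T_n = tridiag(1,1,1)`: the `n × n` matrix with diagonal, superdiagonal and subdiagonal
entries all `1`. -/
def Tmat (n : ℕ) : Matrix (Fin n) (Fin n) ℝ :=
  Matrix.of fun i j =>
    if (i : ℕ) = (j : ℕ) ∨ (i : ℕ) + 1 = (j : ℕ) ∨ (j : ℕ) + 1 = (i : ℕ) then 1 else 0

def dseq : ℕ → ℝ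
  | 0 => 1
  | 1 => 1
  | (n+2) => dseq (n+1) - dseq n

lemma subm1 (n : ℕ) :
    (Tmat (n+2)).submatrix Fin.succ ((0 : Fin (n+2)).succAbove) = Tmat (n+1) := by
  ext i j
  simp only [Tmat, submatrix_apply, of_apply, Fin.succAbove_zero, Fin.val_succ]
  apply if_congr _ rfl rfl
  omega

lemma subm2 (n : ℕ) :
    ((Tmat (n+2)).submatrix Fin.succ ((1 : Fin (n+2)).succAbove)).submatrix
      ((0 : Fin (n+1)).succAbove) Fin.succ = Tmat n := by
  ext i j
  have h : (((1 : Fin (n+2)).succAbove j.succ) : ℕ) = (j : ℕ) + 2 := by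
    rw [Fin.succAbove]
    split
    · next hc => simp [Fin.lt_def] at hc
    · simp
  simp only [Tmat, submatrix_apply, of_apply, Fin.succAbove_zero, Fin.val_succ, h]
  apply if_congr _ rfl rfl
  omega

lemma det_Tmat : ∀ n, (Tmat n).det = dseq n := by
  intro n
  induction n using Nat.twoStepInduction with
  | zero => simp [Tmat, dseq]
  | one => simp [Tmat, dseq, Matrix.det_fin_one]
  | more n ih1 ih2 =>
    rw [Matrix.det_succ_row_zero, Fin.sum_univ_succ, Fin.sum_univ_succ]
    have h0 : (Tmat (n+2)) 0 0 = 1 := by simp [Tmat]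
    have h1 : (Tmat (n+2)) 0 1 = 1 := by simp [Tmat]
    have h2 : ∀ j : Fin n, (Tmat (n+2)) 0 j.succ.succ = 0 := by
      intro j; simp [Tmat]
    have hB : ((Tmat (n+2)).submatrix Fin.succ ((1 : Fin (n+2)).succAbove)).det
        = (Tmat n).det := by
      rw [Matrix.det_succ_column_zero, Fin.sum_univ_succ]
      have hB0 : ((Tmat (n+2)).submatrix Fin.succ ((1 : Fin (n+2)).succAbove)) 0 0 = 1 := by
        simp [Tmat, Fin.succAbove]
      have hBs : ∀ i : Fin n,
          ((Tmat (n+2)).submatrix Fin.succ ((1 : Fin (n+2)).succAbove)) i.succ 0 = 0 := by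
        intro i
        simp [Tmat, Fin.succAbove]
      simp only [hB0, hBs, Fin.val_zero, pow_zero, one_mul, mul_zero, zero_mul,
        Finset.sum_const_zero, add_zero, mul_one]
      rw [subm2]
    simp only [Fin.succ_zero_eq_one, h0, h1, h2, mul_zero, zero_mul, Finset.sum_const_zero, add_zero,
      Fin.val_zero, pow_zero, one_mul, Fin.val_one, pow_one, mul_one, neg_one_mul]
    rw [subm1, hB, ih2, ih1]
    show dseq (n+2) = _
    rw [dseq]

lemma dseq_period (n : ℕ) : dseq (n+3) = - dseq n := by
  show dseq (n+1+2) = _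
  rw [dseq]
  show dseq (n+2) - _ = _
  rw [dseq]
  ring

lemma dseq_zero_iff : ∀ n, dseq n = 0 ↔ n % 3 = 2 := by
  intro n
  induction n using Nat.strong_induction_on with
  | _ n ih =>
    match n with
    | 0 => simp [dseq]
    | 1 => simp [dseq]
    | 2 => norm_num [dseq]
    | (m+3) =>
      rw [dseq_period, neg_eq_zero, ih m (by omega)]
      omega

/-- `T_n` is nonsingular iff `n` is not of the form `3l − 1` for some `l ≥ 1`. -/
theorem stmt7 (n : ℕ) (hn : 0 < n) :
    (Tmat n).det ≠ 0 ↔ ¬ ∃ l : ℕ, 0 < l ∧ n = 3 * l - 1 := by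
  rw [det_Tmat, ne_eq, dseq_zero_iff]
  apply not_congr
  constructor
  · intro h
    exact ⟨(n+1)/3, by omega, by omega⟩
  · rintro ⟨l, hl, rfl⟩
    omega
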